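/- For Sₖ(Z) defined as the sum of the k smallest entries of Z, and a nonnegative increment vector y, the joint improvement dominates the sum of local improvements: Sₖ(Z+y) − Sₖ(Z) ≥ Σᵢ [Sₖ(Z + yᵢeᵢ) − Sₖ(Z)]. -/

import Mathlib

open Finset

/-- `S_k(Z)`: the minimum of `∑_{j∈J} z_j` over all `k`-element subsets `J`
of the index set (equivalently, the sum of the `k` smallest entries of `Z`). -/
noncomputable def Sk {n : ℕ} (k : ℕ) (Z : Fin n → ℝ) : ℝ :=
  sInf ((fun J : Finset (Fin n) => ∑ j ∈ J, Z j) '' {J | J.card = k})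

lemma Sk_le {n : ℕ} (k : ℕ) (Z : Fin n → ℝ) {J : Finset (Fin n)}
    (hJ : J.card = k) : Sk k Z ≤ ∑ j ∈ J, Z j := by
  apply csInf_le ((Set.Finite.image _ (Set.toFinite _)).bddBelow)
  exact ⟨J, hJ, rfl⟩

lemma Sk_attained {n : ℕ} (k : ℕ) (hkn : k ≤ n) (Z : Fin n → ℝ) :
    ∃ J : Finset (Fin n), J.card = k ∧ Sk k Z = ∑ j ∈ J, Z j := by
  obtain ⟨t, -, ht⟩ := Finset.exists_subset_card_eq (s := (univ : Finset (Fin n))) (n := k) (by simpa using hkn)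
  have hne : ((fun J : Finset (Fin n) => ∑ j ∈ J, Z j) '' {J | J.card = k}).Nonempty :=
    ⟨_, ⟨t, ht, rfl⟩⟩
  obtain ⟨J, hJ, hval⟩ := hne.csInf_mem (Set.Finite.image _ (Set.toFinite _))
  exact ⟨J, hJ, hval.symm⟩

/-- **Local–Gain lower bound for the sum of the `k` smallest entries.** -/
theorem sum_k_smallest_local_gain_lb {n : ℕ} (k : ℕ) (hk1 : 1 ≤ k)
    (hkn : k ≤ n) (Z y : Fin n → ℝ) (hy : ∀ i, 0 ≤ y i) :
    Sk k (Z + y) - Sk k Z ≥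
      ∑ i, (Sk k (Function.update Z i (Z i + y i)) - Sk k Z) := by
  obtain ⟨J0, hJ0c, hJ0⟩ := Sk_attained k hkn Z
  obtain ⟨J, hJc, hJ⟩ := Sk_attained k hkn (Z + y)
  set d : Fin n → ℝ := fun i => Sk k (Function.update Z i (Z i + y i)) - Sk k Z with hd
  -- terms outside J0 are nonpositive
  have h0 : ∀ i ∉ J0, d i ≤ 0 := by
    intro i hi
    have hle : Sk k (Function.update Z i (Z i + y i)) ≤
        ∑ j ∈ J0, Function.update Z i (Z i + y i) j := Sk_le k _ hJ0c
    have heq : ∑ j ∈ J0, Function.update Z i (Z i + y i) j = ∑ j ∈ J0, Z j :=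
      Finset.sum_congr rfl fun j hj => Function.update_of_ne (by rintro rfl; exact hi hj) _ _
    simp only [hd]
    linarith [hle, heq ▸ hle]
  -- terms in J0 are at most y i
  have h1 : ∀ i ∈ J0, d i ≤ y i := by
    intro i hi
    have hle : Sk k (Function.update Z i (Z i + y i)) ≤
        ∑ j ∈ J0, Function.update Z i (Z i + y i) j := Sk_le k _ hJ0c
    have heq : ∑ j ∈ J0, Function.update Z i (Z i + y i) j
        = (Z i + y i) + (∑ j ∈ J0, Z j - Z i) := by
      rw [Finset.sum_update_of_mem hi, Finset.sdiff_singleton_eq_erase,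
        Finset.sum_erase_eq_sub hi]
    simp only [hd]
    linarith
  -- exchange bound for i ∈ J0 \ J, m ∈ J \ J0
  have h2 : ∀ i ∈ J0 \ J, ∀ m ∈ J \ J0, d i ≤ Z m + y m - Z i := by
    intro i hi m hm
    obtain ⟨hiJ0, -⟩ := Finset.mem_sdiff.mp hi
    obtain ⟨-, hmJ0⟩ := Finset.mem_sdiff.mp hm
    have hne : i ≠ m := by rintro rfl; exact hmJ0 hiJ0
    have hmE : m ∉ J0.erase i := fun h => hmJ0 (Finset.mem_of_mem_erase h)
    have hcard : (insert m (J0.erase i)).card = k := by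
      rw [Finset.card_insert_of_notMem hmE, Finset.card_erase_of_mem hiJ0, hJ0c]
      exact Nat.succ_pred_eq_of_pos hk1
    have hiJ' : i ∉ insert m (J0.erase i) := by
      simp [hne, Finset.notMem_erase]
    have hle : Sk k (Function.update Z i (Z i + y i)) ≤
        ∑ j ∈ insert m (J0.erase i), Function.update Z i (Z i + y i) j := Sk_le k _ hcard
    have heqA : ∑ j ∈ insert m (J0.erase i), Function.update Z i (Z i + y i) j
        = ∑ j ∈ insert m (J0.erase i), Z j :=
      Finset.sum_congr rfl fun j hj => Function.update_of_ne (ne_of_mem_of_not_mem hj hiJ') _ _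
    have heq : ∑ j ∈ insert m (J0.erase i), Z j = Z m + (∑ j ∈ J0, Z j - Z i) := by
      rw [Finset.sum_insert hmE, Finset.sum_erase_eq_sub hiJ0]
    have hym := hy m
    simp only [hd]
    linarith
  -- sum over everything ≤ sum over J0
  have hA : ∑ i, d i ≤ ∑ i ∈ J0, d i := by
    rw [← Finset.sum_sdiff (Finset.subset_univ J0)]
    have : ∑ i ∈ univ \ J0, d i ≤ 0 :=
      Finset.sum_nonpos fun i hi => h0 i (Finset.mem_sdiff.mp hi).2
    linarith
  have hB : ∑ i ∈ J0, d i = ∑ i ∈ J0 ∩ J, d i + ∑ i ∈ J0 \ J, d i :=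
    (Finset.sum_inter_add_sum_sdiff J0 J d).symm
  have hC : ∑ i ∈ J0 ∩ J, d i ≤ ∑ i ∈ J0 ∩ J, y i :=
    Finset.sum_le_sum fun i hi => h1 i (Finset.mem_inter.mp hi).1
  -- the bijection between J0 \ J and J \ J0
  have hcard : (J0 \ J).card = (J \ J0).card :=
    Finset.card_sdiff_comm (hJ0c.trans hJc.symm)
  have hD : ∑ i ∈ J0 \ J, d i ≤ ∑ m ∈ J \ J0, (Z m + y m) - ∑ i ∈ J0 \ J, Z i := by
    let e := Finset.equivOfCardEq hcard
    calc ∑ i ∈ J0 \ J, d i = ∑ i : {x // x ∈ J0 \ J}, d i :=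
          (Finset.sum_coe_sort _ _).symm
      _ ≤ ∑ i : {x // x ∈ J0 \ J}, (Z (e i : Fin n) + y (e i : Fin n) - Z (i : Fin n)) :=
          Finset.sum_le_sum fun i _ => h2 i i.2 (e i) (e i).2
      _ = ∑ i : {x // x ∈ J0 \ J}, (Z (e i : Fin n) + y (e i : Fin n))
            - ∑ i : {x // x ∈ J0 \ J}, Z (i : Fin n) := by
          rw [Finset.sum_sub_distrib]
      _ = ∑ m ∈ J \ J0, (Z m + y m) - ∑ i ∈ J0 \ J, Z i := by
          rw [Equiv.sum_comp e (fun m : {x // x ∈ J \ J0} => Z (m : Fin n) + y (m : Fin n)),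
            Finset.sum_coe_sort (J \ J0) (fun m => Z m + y m),
            Finset.sum_coe_sort (J0 \ J) Z]
  -- assemble
  have e1 : ∑ j ∈ J, (Z + y) j
      = ∑ j ∈ J ∩ J0, (Z j + y j) + ∑ j ∈ J \ J0, (Z j + y j) := by
    simp only [Pi.add_apply]
    exact (Finset.sum_inter_add_sum_sdiff J J0 _).symm
  have e2 : ∑ j ∈ J0, Z j = ∑ j ∈ J0 ∩ J, Z j + ∑ j ∈ J0 \ J, Z j :=
    (Finset.sum_inter_add_sum_sdiff J0 J _).symm
  have e3 : ∑ j ∈ J ∩ J0, (Z j + y j) = ∑ j ∈ J0 ∩ J, Z j + ∑ j ∈ J0 ∩ J, y j := by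
    rw [Finset.inter_comm, Finset.sum_add_distrib]
  rw [ge_iff_le, hJ, hJ0]
  have : ∑ i, (Sk k (Function.update Z i (Z i + y i)) - Sk k Z) = ∑ i, d i := rfl
  rw [this]
  linarith
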